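/- Let 1 ≤ d ≤ 5 and let A, B ∈ M_d(ℂ) be a simple representation of B_3 such that A is diagonalizable with pairwise distinct eigenvalues λ_1, …, λ_d. Then the d matrices T = {A·B·A·e_{B,1}} ∪ {e_{A,i}·e_{B,1} : 2 ≤ i ≤ d} are linearly independent over ℂ and form a basis of the left ideal M_d(ℂ)·e_{B,1} = {X·e_{B,1} : X ∈ M_d(ℂ)}; in particular this left ideal is a d-dimensional ℂ-vector space. -/

import Mathlib

open Matrix Polynomial

/-- The eigenprojection `e_{M,i} = ∏_{j ≠ i} (M - λ_j·I)/(λ_i - λ_j)` of a matrix `M`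
onto the `λ_i`-eigenspace. -/
noncomputable def eigProj {d : ℕ} (lam : Fin d → ℂ)
    (M : Matrix (Fin d) (Fin d) ℂ) (i : Fin d) : Matrix (Fin d) (Fin d) ℂ :=
  (∏ j ∈ Finset.univ.erase i, (lam i - lam j)⁻¹) •
    Polynomial.aeval M (∏ j ∈ Finset.univ.erase i, (X - C (lam j)))

namespace BraidAux

variable {d : ℕ}

/-- Conjugation by a pair of mutually inverse matrices, as an algebra homomorphism. -/
noncomputable def conjAlgHom (U V : Matrix (Fin d) (Fin d) ℂ)
    (hUV : U * V = 1) (hVU : V * U = 1) :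
    Matrix (Fin d) (Fin d) ℂ →ₐ[ℂ] Matrix (Fin d) (Fin d) ℂ where
  toFun X := U * X * V
  map_one' := by show U * 1 * V = 1; rw [mul_one, hUV]
  map_mul' X Y := by
    show U * (X * Y) * V = (U * X * V) * (U * Y * V)
    have h : (U * X * V) * (U * Y * V) = U * X * (V * U) * Y * V := by noncomm_ring
    rw [h, hVU, mul_one]
    noncomm_ring
  map_zero' := by show U * 0 * V = 0; simp
  map_add' X Y := by show U * (X + Y) * V = U * X * V + U * Y * V; noncomm_ring
  commutes' r := by
    show U * algebraMap ℂ _ r * V = algebraMap ℂ _ r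
    simp only [Algebra.algebraMap_eq_smul_one]
    rw [mul_smul_comm, mul_one, smul_mul_assoc, hUV]

@[simp] lemma conjAlgHom_apply (U V : Matrix (Fin d) (Fin d) ℂ) (hUV hVU) (X) :
    conjAlgHom U V hUV hVU X = U * X * V := rfl

lemma aeval_diagonal (f : Fin d → ℂ) (q : ℂ[X]) :
    Polynomial.aeval (Matrix.diagonal f) q = Matrix.diagonal (fun k => q.eval (f k)) := by
  induction q using Polynomial.induction_on' with
  | add p q hp hq => simp [hp, hq, diagonal_add]
  | monomial n a =>
      simp only [aeval_monomial, eval_monomial, Matrix.algebraMap_eq_diagonal,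
        Matrix.diagonal_pow, Matrix.diagonal_mul_diagonal]
      rfl

lemma eigProj_diagonal (lam : Fin d → ℂ) (hinj : Function.Injective lam) (i : Fin d) :
    eigProj lam (Matrix.diagonal lam) i = Matrix.single i i (1 : ℂ) := by
  have hq : ∀ k, eval (lam k) (∏ j ∈ Finset.univ.erase i, (X - C (lam j)))
      = ∏ j ∈ Finset.univ.erase i, (lam k - lam j) := by
    intro k; rw [eval_prod]; exact Finset.prod_congr rfl (by simp)
  have hzero : ∀ k, k ≠ i → (∏ j ∈ Finset.univ.erase i, (lam k - lam j)) = 0 := fun k hk =>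
    Finset.prod_eq_zero (Finset.mem_erase.2 ⟨hk, Finset.mem_univ k⟩) (sub_self _)
  have hone : (∏ j ∈ Finset.univ.erase i, (lam i - lam j)⁻¹)
      * (∏ j ∈ Finset.univ.erase i, (lam i - lam j)) = 1 := by
    rw [← Finset.prod_mul_distrib]
    exact Finset.prod_eq_one fun j hj => inv_mul_cancel₀
      (sub_ne_zero_of_ne (hinj.ne_iff.2 (Ne.symm (Finset.mem_erase.1 hj).1)))
  rw [eigProj, aeval_diagonal, ← Matrix.diagonal_smul]
  ext a b
  rcases eq_or_ne a b with rfl | hab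
  · rw [Matrix.diagonal_apply_eq]
    simp only [Pi.smul_apply, smul_eq_mul, hq]
    rcases eq_or_ne a i with rfl | hai
    · rw [hone, Matrix.single_apply_same]
    · rw [hzero a hai, mul_zero]
      exact (Matrix.single_apply_of_ne _ _ _ _ _ (by tauto)).symm
  · rw [Matrix.diagonal_apply_ne _ hab]
    refine (Matrix.single_apply_of_ne _ _ _ _ _ ?_).symm
    rintro ⟨rfl, rfl⟩; exact hab rfl

lemma eigProj_conj (lam : Fin d → ℂ) (hinj : Function.Injective lam)
    (U V : Matrix (Fin d) (Fin d) ℂ) (hUV : U * V = 1) (hVU : V * U = 1) (i : Fin d) :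
    eigProj lam (U * Matrix.diagonal lam * V) i = U * Matrix.single i i (1 : ℂ) * V := by
  have h1 : U * Matrix.diagonal lam * V = conjAlgHom U V hUV hVU (Matrix.diagonal lam) := rfl
  have h2 := eigProj_diagonal lam hinj i
  rw [eigProj] at h2
  rw [eigProj, h1, Polynomial.aeval_algHom_apply, conjAlgHom_apply, ← h2,
    mul_smul_comm, smul_mul_assoc]








variable {d : ℕ}

lemma sandwich (M : Matrix (Fin d) (Fin d) ℂ) (i j : Fin d) :
    Matrix.single i i (1:ℂ) * M * Matrix.single j j 1 = M i j • Matrix.single i j 1 := by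
  ext a b
  rcases eq_or_ne b j with rfl | hbj
  · rw [Matrix.mul_single_apply_same]
    rcases eq_or_ne a i with rfl | hai
    · rw [Matrix.single_mul_apply_same, one_mul, mul_one,
        Matrix.smul_apply, Matrix.single_apply_same, smul_eq_mul, mul_one]
    · rw [Matrix.single_mul_apply_of_ne _ _ _ _ _ hai, zero_mul, Matrix.smul_apply,
        Matrix.single_apply_of_ne _ _ _ _ _ (by tauto), smul_zero]
  · rw [Matrix.mul_single_apply_of_ne _ _ _ _ _ hbj, Matrix.smul_apply,
      Matrix.single_apply_of_ne _ _ _ _ _ (by tauto), smul_zero]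

lemma col_decomp (M : Matrix (Fin d) (Fin d) ℂ) (z : Fin d) :
    M * Matrix.single z z 1 = ∑ i : Fin d, M i z • Matrix.single i z (1:ℂ) := by
  ext a b
  rw [Matrix.sum_apply]
  rcases eq_or_ne b z with rfl | hbz
  · rw [Matrix.mul_single_apply_same, mul_one]
    rw [Finset.sum_eq_single a]
    · rw [Matrix.smul_apply, Matrix.single_apply_same, smul_eq_mul, mul_one]
    · intro c _ hca
      rw [Matrix.smul_apply, Matrix.single_apply_of_ne _ _ _ _ _ (by tauto), smul_zero]
    · intro h; exact absurd (Finset.mem_univ a) h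
  · rw [Matrix.mul_single_apply_of_ne _ _ _ _ _ hbz]
    refine (Finset.sum_eq_zero fun c _ => ?_).symm
    rw [Matrix.smul_apply, Matrix.single_apply_of_ne _ _ _ _ _ (by tauto), smul_zero]

/-- Three power-sum relations with at most three distinct nonzero nodes kill the vector. -/
lemma vanish3 (hd5 : d ≤ 5) (lam : Fin d → ℂ) (hinj : Function.Injective lam)
    (hlam0 : ∀ k, lam k ≠ 0) {i j : Fin d} (hij : i ≠ j) (t : Fin d → ℂ)
    (hti : t i = 0) (htj : t j = 0)
    (h0 : ∑ k, t k = 0) (h1 : ∑ k, lam k * t k = 0) (h2 : ∑ k, (lam k)⁻¹ * t k = 0) :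
    ∀ k, t k = 0 := by
  classical
  by_contra hcon
  push_neg at hcon
  obtain ⟨k0, hk0⟩ := hcon
  set S : Finset (Fin d) := Finset.univ.filter (fun k => t k ≠ 0) with hS
  have hmemS : ∀ k, k ∈ S ↔ t k ≠ 0 := by
    intro k; simp [hS]
  have hSsub : S ⊆ (Finset.univ.erase i).erase j := by
    intro k hk
    have hk' := (hmemS k).1 hk
    refine Finset.mem_erase.2 ⟨?_, Finset.mem_erase.2 ⟨?_, Finset.mem_univ k⟩⟩
    · rintro rfl; exact hk' htj
    · rintro rfl; exact hk' hti
  have hcard : S.card ≤ 3 := by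
    calc S.card ≤ ((Finset.univ.erase i).erase j).card := Finset.card_le_card hSsub
    _ ≤ 3 := by
        rw [Finset.card_erase_of_mem (Finset.mem_erase.2 ⟨Ne.symm hij, Finset.mem_univ j⟩),
          Finset.card_erase_of_mem (Finset.mem_univ i), Finset.card_univ, Fintype.card_fin]
        omega
  have hpos : 0 < S.card := Finset.card_pos.2 ⟨k0, (hmemS k0).2 hk0⟩
  -- restrict the three sums to S
  have hrestrict : ∀ f : Fin d → ℂ, (∑ k, f k * t k) = ∑ k ∈ S, f k * t k := by
    intro f
    refine (Finset.sum_subset (Finset.subset_univ S) fun x _ hx => ?_).symm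
    have : t x = 0 := by_contra fun h => hx ((hmemS x).2 h)
    rw [this, mul_zero]
  have e0 : ∑ k ∈ S, t k = 0 := by
    rw [Finset.sum_subset (Finset.subset_univ S)
      (fun x _ hx => by_contra fun h => hx ((hmemS x).2 h))]
    exact h0
  have e1 : ∑ k ∈ S, lam k * t k = 0 := by rw [← hrestrict]; exact h1
  have e2 : ∑ k ∈ S, (lam k)⁻¹ * t k = 0 := by rw [← hrestrict]; exact h2
  interval_cases h : S.card
  · -- card 1
    obtain ⟨a, ha⟩ := Finset.card_eq_one.1 h
    rw [ha, Finset.sum_singleton] at e0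
    exact ((hmemS a).1 (ha ▸ Finset.mem_singleton_self a)) e0
  · -- card 2
    obtain ⟨a, b, hab, hexp⟩ := Finset.card_eq_two.1 h
    have hta : t a ≠ 0 := (hmemS a).1 (hexp ▸ by simp)
    have htb : t b ≠ 0 := (hmemS b).1 (hexp ▸ by simp)
    rw [hexp, Finset.sum_pair hab] at e0 e1
    have hlab : lam a ≠ lam b := hinj.ne_iff.2 hab
    have : (lam a - lam b) * t a = 0 := by linear_combination e1 - lam b * e0
    rcases mul_eq_zero.1 this with h' | h'
    · exact hlab (sub_eq_zero.1 h')
    · exact hta h'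
  · -- card 3
    obtain ⟨a, b, c, hab, hac, hbc, hexp⟩ := Finset.card_eq_three.1 h
    have hta : t a ≠ 0 := (hmemS a).1 (hexp ▸ by simp)
    have htb : t b ≠ 0 := (hmemS b).1 (hexp ▸ by simp)
    have htc : t c ≠ 0 := (hmemS c).1 (hexp ▸ by simp)
    have hsum3 : ∀ f : Fin d → ℂ, (∑ k ∈ S, f k) = f a + f b + f c := by
      intro f
      rw [hexp, Finset.sum_insert (by simp [hab, hac]), Finset.sum_pair hbc, add_assoc]
    rw [hsum3] at e0 e1 e2
    have hA := hlam0 a; have hB := hlam0 b; have hC := hlam0 c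
    have e2' : lam b * lam c * t a + lam a * lam c * t b + lam a * lam b * t c = 0 := by
      have expand : lam a * lam b * lam c * ((lam a)⁻¹ * t a + (lam b)⁻¹ * t b + (lam c)⁻¹ * t c)
          = lam b * lam c * t a + lam a * lam c * t b + lam a * lam b * t c := by
        field_simp
      rw [e2, mul_zero] at expand
      exact expand.symm
    have hlab : lam a ≠ lam b := hinj.ne_iff.2 hab
    have hlac : lam a ≠ lam c := hinj.ne_iff.2 hac
    have key : (lam a - lam b) * (lam a - lam c) * t a = 0 := by
      linear_combination (-(lam a * (lam b + lam c))) * e0 + lam a * e1 + e2'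
    rcases mul_eq_zero.1 key with h' | h'
    · rcases mul_eq_zero.1 h' with h'' | h''
      · exact hlab (sub_eq_zero.1 h'')
      · exact hlac (sub_eq_zero.1 h'')
    · exact hta h'




variable {d : ℕ}

section rels
variable {R : Type*} [Ring R]

lemma rel_DN {Λ N : R} (hbraid : Λ*N*Λ = N*Λ*N) : (Λ*N*Λ)*N = Λ*(Λ*N*Λ) := by
  have hb : Λ*(N*(Λ*N)) = Λ*(Λ*(N*Λ)) := by
    have := congrArg (fun x => Λ * x) hbraid.symm
    simpa only [mul_assoc] using this
  simpa only [mul_assoc] using hb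

lemma rel_DLD {Λ N : R} (δ : ℂ) [Algebra ℂ R] (hbraid : Λ*N*Λ = N*Λ*N)
    (hδ : (Λ*N*Λ)*(Λ*N*Λ) = δ•1) : (Λ*N*Λ)*Λ*(Λ*N*Λ) = δ•N := by
  calc (Λ*N*Λ)*Λ*(Λ*N*Λ) = (Λ*N*Λ)*(Λ*(Λ*N*Λ)) := by simp only [mul_assoc]
  _ = (Λ*N*Λ)*((Λ*N*Λ)*N) := by rw [rel_DN hbraid]
  _ = ((Λ*N*Λ)*(Λ*N*Λ))*N := by simp only [mul_assoc]
  _ = δ•N := by rw [hδ, smul_mul_assoc, one_mul]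

lemma rel_DLD' {Λ Λ' N : R} (hΛΛ' : Λ*Λ' = 1) (hΛ'Λ : Λ'*Λ = 1)
    (hbraid : Λ*N*Λ = N*Λ*N) : (Λ*N*Λ)*Λ'*(Λ*N*Λ) = Λ*(Λ*N*Λ)*Λ := by
  have hb2 : N*(Λ*(N*Λ)) = Λ*(N*(Λ*Λ)) := by
    have := congrArg (fun x => x * Λ) hbraid.symm
    simpa only [mul_assoc] using this
  have h1 : Λ'*(Λ*(N*Λ)) = N*Λ := by rw [← mul_assoc, hΛ'Λ, one_mul]
  calc (Λ*N*Λ)*Λ'*(Λ*N*Λ) = Λ*(N*(Λ*(Λ'*(Λ*(N*Λ))))) := by simp only [mul_assoc]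
  _ = Λ*(N*(Λ*(N*Λ))) := by rw [h1]
  _ = Λ*(Λ*(N*(Λ*Λ))) := by rw [hb2]
  _ = Λ*(Λ*N*Λ)*Λ := by simp only [mul_assoc]

lemma rel_N {Λ Λ' N : R} (hΛΛ' : Λ*Λ' = 1) (hΛ'Λ : Λ'*Λ = 1) :
    Λ'*(Λ*N*Λ)*Λ' = N := by
  calc Λ'*(Λ*N*Λ)*Λ' = Λ'*(Λ*(N*(Λ*Λ'))) := by simp only [mul_assoc]
  _ = Λ'*(Λ*N) := by rw [hΛΛ', mul_one]
  _ = N := by rw [← mul_assoc, hΛ'Λ, one_mul]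

end rels

lemma offdiag_core (hd5 : d ≤ 5) (lam : Fin d → ℂ)
    (hinj : Function.Injective lam) (hlam0 : ∀ k, lam k ≠ 0)
    (N D : Matrix (Fin d) (Fin d) ℂ) (δ : ℂ)
    (hadj : Algebra.adjoin ℂ ({Matrix.diagonal lam, N} : Set (Matrix (Fin d) (Fin d) ℂ)) = ⊤)
    (hDD : D * D = δ • 1)
    (hDΛD : D * Matrix.diagonal lam * D = δ • N)
    (hDΛ'D : D * Matrix.diagonal (fun k => (lam k)⁻¹) * D
      = Matrix.diagonal lam * D * Matrix.diagonal lam)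
    (hNentry : ∀ a b, N a b = (lam a)⁻¹ * (D a b * (lam b)⁻¹)) :
    ∀ i j : Fin d, i ≠ j → D i j ≠ 0 := by
  classical
  -- zero propagation
  have zeroProp : ∀ i j : Fin d, i ≠ j → D i j = 0 → ∀ k, D i k * D k j = 0 := by
    intro i j hij hDij
    have h0 : ∑ k, D i k * D k j = 0 := by
      have := congrFun (congrFun hDD i) j
      rw [Matrix.mul_apply] at this
      rw [this, Matrix.smul_apply, Matrix.one_apply_ne hij, smul_zero]
    have h1 : ∑ k, lam k * (D i k * D k j) = 0 := by
      have h := congrFun (congrFun (show D * (Matrix.diagonal lam * D) = δ • N from by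
        rw [← mul_assoc]; exact hDΛD) i) j
      rw [Matrix.mul_apply] at h
      have hterm : ∀ k, D i k * (Matrix.diagonal lam * D) k j = lam k * (D i k * D k j) := by
        intro k; rw [Matrix.diagonal_mul]; ring
      rw [Finset.sum_congr rfl (fun k _ => hterm k)] at h
      rw [h, Matrix.smul_apply, hNentry i j, hDij]
      simp
    have h2 : ∑ k, (lam k)⁻¹ * (D i k * D k j) = 0 := by
      have h := congrFun (congrFun (show D * (Matrix.diagonal (fun k => (lam k)⁻¹) * D)
          = Matrix.diagonal lam * D * Matrix.diagonal lam from by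
        rw [← mul_assoc]; exact hDΛ'D) i) j
      rw [Matrix.mul_apply] at h
      have hterm : ∀ k, D i k * (Matrix.diagonal (fun k => (lam k)⁻¹) * D) k j
          = (lam k)⁻¹ * (D i k * D k j) := by
        intro k; rw [Matrix.diagonal_mul]; ring
      rw [Finset.sum_congr rfl (fun k _ => hterm k)] at h
      rw [h, Matrix.mul_diagonal, Matrix.diagonal_mul, hDij]
      ring
    have hti : D i i * D i j = 0 := by rw [hDij, mul_zero]
    have htj : D i j * D j j = 0 := by rw [hDij, zero_mul]
    exact vanish3 hd5 lam hinj hlam0 hij _ hti htj h0 h1 h2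
  -- main argument
  intro i0 j hij0 hz
  set T : Set (Fin d) := insert j {k | D k j ≠ 0} with hTdef
  have hjT : j ∈ T := Set.mem_insert j _
  have hi0T : i0 ∉ T := by
    intro h
    rcases Set.mem_insert_iff.1 h with h' | h'
    · exact hij0 h'
    · exact h' hz
  have hNT : ∀ k m, k ∉ T → m ∈ T → N k m = 0 := by
    intro k m hk hm
    have hkj : k ≠ j := fun h => hk (by rw [h]; exact hjT)
    have hDkj : D k j = 0 := by
      by_contra h
      exact hk (Set.mem_insert_of_mem _ h)
    have hDkm : D k m = 0 := by
      rcases Set.mem_insert_iff.1 hm with rfl | hm'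
      · exact hDkj
      · rcases mul_eq_zero.1 (zeroProp k j hkj hDkj m) with h | h
        · exact h
        · exact absurd h hm'
    rw [hNentry k m, hDkm]
    ring
  -- the invariant subspace
  let U : Submodule ℂ (Fin d → ℂ) :=
  { carrier := {u | ∀ k, k ∉ T → u k = 0}
    add_mem' := fun hu hv k hk => by
      rw [Pi.add_apply, hu k hk, hv k hk, add_zero]
    zero_mem' := fun k hk => rfl
    smul_mem' := fun c u hu k hk => by rw [Pi.smul_apply, hu k hk, smul_zero] }
  have hUsingle : Pi.single j (1:ℂ) ∈ U := by
    intro k hk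
    exact Pi.single_eq_of_ne (fun h => hk (by rw [h]; exact hjT)) 1
  have hUΛ : ∀ u ∈ U, (Matrix.diagonal lam).mulVec u ∈ U := by
    intro u hu k hk
    show (Matrix.diagonal lam).mulVec u k = 0
    rw [Matrix.mulVec_diagonal, hu k hk, mul_zero]
  have hUN : ∀ u ∈ U, N.mulVec u ∈ U := by
    intro u hu k hk
    show ∑ m, N k m * u m = 0
    refine Finset.sum_eq_zero fun m _ => ?_
    by_cases hm : m ∈ T
    · rw [hNT k m hk hm, zero_mul]
    · rw [hu m hm, mul_zero]
  -- the stabilizer subalgebra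
  let Ssub : Subalgebra ℂ (Matrix (Fin d) (Fin d) ℂ) :=
  { carrier := {X | ∀ u ∈ U, X.mulVec u ∈ U}
    mul_mem' := fun {X} {Y} hX hY u hu => by
      rw [← Matrix.mulVec_mulVec]
      exact hX _ (hY _ hu)
    one_mem' := fun u hu => by rw [Matrix.one_mulVec]; exact hu
    add_mem' := fun {X} {Y} hX hY u hu => by
      rw [Matrix.add_mulVec]
      exact U.add_mem (hX _ hu) (hY _ hu)
    zero_mem' := fun u hu => by rw [Matrix.zero_mulVec]; exact U.zero_mem
    algebraMap_mem' := fun r u hu => by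
      rw [Algebra.algebraMap_eq_smul_one, Matrix.smul_mulVec, Matrix.one_mulVec]
      exact U.smul_mem r hu }
  have hgen : ({Matrix.diagonal lam, N} : Set (Matrix (Fin d) (Fin d) ℂ)) ⊆ ↑Ssub := by
    rintro x (rfl | rfl)
    · exact hUΛ
    · exact hUN
  have hle : (⊤ : Subalgebra ℂ (Matrix (Fin d) (Fin d) ℂ)) ≤ Ssub := by
    rw [← hadj]
    exact Algebra.adjoin_le hgen
  have hXmem : (Matrix.single i0 j (1:ℂ)) ∈ Ssub := hle Algebra.mem_top
  have hXv : (Matrix.single i0 j (1:ℂ)).mulVec (Pi.single j 1) = Pi.single i0 1 := by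
    rw [Matrix.single_mulVec]
    funext a
    rcases eq_or_ne a i0 with rfl | ha
    · rw [Function.update_self, Pi.single_eq_same, Pi.single_eq_same, one_mul]
    · rw [Function.update_of_ne ha, Pi.single_eq_of_ne ha, Pi.zero_apply]
  have hmem : Pi.single i0 (1:ℂ) ∈ U := by
    rw [← hXv]
    exact hXmem _ hUsingle
  have h1 : (1:ℂ) = 0 := by
    have := hmem i0 hi0T
    rwa [Pi.single_eq_same] at this
  exact one_ne_zero h1




variable {d : ℕ}

lemma rel_ND {R : Type*} [Ring R] {Λ N : R} (hbraid : Λ*N*Λ = N*Λ*N) :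
    N*(Λ*N*Λ) = (Λ*N*Λ)*Λ := by
  have := congrArg (fun x => x * Λ) hbraid
  simpa only [mul_assoc] using this.symm

/-- In a matrix algebra generated by `Λ` and `N`, the square of `D = Λ*N*Λ` is a
nonzero scalar when `Λ*N*Λ*N = Λ*(Λ*N*Λ)` etc. -/
lemma Dsq_scalar (hd : 1 ≤ d) (lam : Fin d → ℂ) (N : Matrix (Fin d) (Fin d) ℂ)
    (hΛu : IsUnit (Matrix.diagonal lam)) (hNu : IsUnit N)
    (hbraidN : Matrix.diagonal lam * N * Matrix.diagonal lam
      = N * Matrix.diagonal lam * N)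
    (hadjN : Algebra.adjoin ℂ ({Matrix.diagonal lam, N} : Set (Matrix (Fin d) (Fin d) ℂ)) = ⊤) :
    ∃ δ : ℂ, δ ≠ 0 ∧ (Matrix.diagonal lam * N * Matrix.diagonal lam)
      * (Matrix.diagonal lam * N * Matrix.diagonal lam) = δ • 1 := by
  classical
  have hDN := rel_DN hbraidN
  have hND := rel_ND hbraidN
  set G : Matrix (Fin d) (Fin d) ℂ := Matrix.diagonal lam * N * Matrix.diagonal lam with hGdef
  have hGu : IsUnit G := by rw [hGdef]; exact (hΛu.mul hNu).mul hΛu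
  have hcomΛ : Commute (G*G) (Matrix.diagonal lam) := by
    show G*G*(Matrix.diagonal lam) = (Matrix.diagonal lam)*(G*G)
    calc G*G*(Matrix.diagonal lam) = G*(G*Matrix.diagonal lam) := mul_assoc _ _ _
    _ = G*(N*G) := by rw [← hND]
    _ = (G*N)*G := (mul_assoc _ _ _).symm
    _ = ((Matrix.diagonal lam)*G)*G := by rw [hDN]
    _ = (Matrix.diagonal lam)*(G*G) := mul_assoc _ _ _
  have hcomN : Commute (G*G) N := by
    show G*G*N = N*(G*G)
    calc G*G*N = G*(G*N) := mul_assoc _ _ _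
    _ = G*((Matrix.diagonal lam)*G) := by rw [hDN]
    _ = (G*(Matrix.diagonal lam))*G := (mul_assoc _ _ _).symm
    _ = (N*G)*G := by rw [hND]
    _ = N*(G*G) := mul_assoc _ _ _
  have hcomm_all : ∀ X : Matrix (Fin d) (Fin d) ℂ, Commute (G*G) X := by
    intro X
    have hX : X ∈ Algebra.adjoin ℂ ({Matrix.diagonal lam, N} : Set (Matrix (Fin d) (Fin d) ℂ)) := by
      rw [hadjN]; exact Algebra.mem_top
    induction hX using Algebra.adjoin_induction with
    | mem x hx =>
        rcases hx with rfl | rfl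
        · exact hcomΛ
        · exact hcomN
    | algebraMap r => exact (Algebra.commutes r (G*G)).symm
    | add x y _ _ hx hy => exact hx.add_right hy
    | mul x y _ _ hx hy => exact hx.mul_right hy
  obtain ⟨δ, hδ'⟩ := Matrix.mem_range_scalar_of_commute_single
    (M := G*G) (fun i j _ => (hcomm_all _).symm)
  have hδ : G * G = δ • 1 := by
    rw [← hδ', Matrix.scalar_apply]
    ext a b
    rcases eq_or_ne a b with rfl | hab
    · rw [Matrix.diagonal_apply_eq, Matrix.smul_apply, Matrix.one_apply_eq, smul_eq_mul, mul_one]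
    · rw [Matrix.diagonal_apply_ne _ hab, Matrix.smul_apply, Matrix.one_apply_ne hab, smul_zero]
  refine ⟨δ, ?_, hδ⟩
  have hdet : IsUnit ((G*G).det) := (Matrix.isUnit_iff_isUnit_det _).1 (hGu.mul hGu)
  rw [hδ, Matrix.det_smul, Matrix.det_one, mul_one] at hdet
  intro h0
  rw [h0, Fintype.card_fin, zero_pow (by omega)] at hdet
  exact (isUnit_iff_ne_zero.1 hdet) rfl

lemma offdiag_all (hd5 : d ≤ 5) (lam : Fin d → ℂ)
    (hinj : Function.Injective lam) (hlam0 : ∀ k, lam k ≠ 0)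
    (N : Matrix (Fin d) (Fin d) ℂ) (δ : ℂ) (hδ0 : δ ≠ 0)
    (hbraidN : Matrix.diagonal lam * N * Matrix.diagonal lam
      = N * Matrix.diagonal lam * N)
    (hadjN : Algebra.adjoin ℂ ({Matrix.diagonal lam, N} : Set (Matrix (Fin d) (Fin d) ℂ)) = ⊤)
    (hδ : (Matrix.diagonal lam * N * Matrix.diagonal lam)
      * (Matrix.diagonal lam * N * Matrix.diagonal lam) = δ • 1) :
    ∀ i j : Fin d, i ≠ j → (Matrix.diagonal lam * N * Matrix.diagonal lam) i j ≠ 0 := by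
  have hΛΛ' : Matrix.diagonal lam * Matrix.diagonal (fun k => (lam k)⁻¹) = 1 := by
    ext a b
    rcases eq_or_ne a b with rfl | hab
    · rw [Matrix.diagonal_mul, Matrix.diagonal_apply_eq, Matrix.one_apply_eq,
        mul_inv_cancel₀ (hlam0 a)]
    · rw [Matrix.diagonal_mul, Matrix.diagonal_apply_ne _ hab, Matrix.one_apply_ne hab, mul_zero]
  have hΛ'Λ : Matrix.diagonal (fun k => (lam k)⁻¹) * Matrix.diagonal lam = 1 := by
    ext a b
    rcases eq_or_ne a b with rfl | hab
    · rw [Matrix.diagonal_mul, Matrix.diagonal_apply_eq, Matrix.one_apply_eq,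
        inv_mul_cancel₀ (hlam0 a)]
    · rw [Matrix.diagonal_mul, Matrix.diagonal_apply_ne _ hab, Matrix.one_apply_ne hab, mul_zero]
  have hNentry : ∀ a b, N a b = (lam a)⁻¹
      * ((Matrix.diagonal lam * N * Matrix.diagonal lam) a b * (lam b)⁻¹) := by
    intro a b
    conv_lhs => rw [← rel_N (N := N) hΛΛ' hΛ'Λ]
    rw [Matrix.mul_diagonal, Matrix.diagonal_mul]
    ring
  exact offdiag_core hd5 lam hinj hlam0 N _ δ hadjN hδ
    (rel_DLD δ hbraidN hδ) (rel_DLD' hΛΛ' hΛ'Λ hbraidN) hNentry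




variable {d : ℕ}

section helpers
variable {R : Type*} [Ring R]

lemma conj_mul' {U V X Y : R} (hVU : V * U = 1) :
    (U*X*V)*(U*Y*V) = U*(X*Y)*V := by
  have h : U*(X*((V*U)*(Y*V))) = U*(X*(Y*V)) := by rw [hVU, one_mul]
  calc (U*X*V)*(U*Y*V) = U*(X*((V*U)*(Y*V))) := by simp only [mul_assoc]
  _ = U*(X*(Y*V)) := h
  _ = U*(X*Y)*V := by simp only [mul_assoc]

lemma conj_cancel {U V X : R} (hVU : V * U = 1) :
    V*(U*X*V)*U = X := by
  calc V*(U*X*V)*U = (V*U)*(X*(V*U)) := by simp only [mul_assoc]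
  _ = X := by rw [hVU, one_mul, mul_one]

lemma sandwich_cancel {U V W Z X : R} (hVU : V * U = 1) (hWZ : W * Z = 1) :
    V*(U*X*W)*Z = X := by
  calc V*(U*X*W)*Z = (V*U)*(X*(W*Z)) := by simp only [mul_assoc]
  _ = X := by rw [hVU, hWZ, one_mul, mul_one]

end helpers

lemma conj_sum (P Q' : Matrix (Fin d) (Fin d) ℂ) (f : Fin d → ℂ)
    (E : Fin d → Matrix (Fin d) (Fin d) ℂ) :
    P * (∑ i, f i • E i) * Q' = ∑ i, f i • (P * E i * Q') := by
  rw [Finset.mul_sum, Finset.sum_mul]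
  exact Finset.sum_congr rfl fun i _ => by rw [mul_smul_comm, smul_mul_assoc]

lemma single_LI : LinearIndependent ℂ (fun i : Fin d => Pi.single i (1:ℂ)) := by
  have h := (Pi.basisFun ℂ (Fin d)).linearIndependent
  have he : ⇑(Pi.basisFun ℂ (Fin d)) = fun i => Pi.single i (1:ℂ) := by
    funext i
    exact Pi.basisFun_apply ℂ (Fin d) i
  rwa [he] at h


end BraidAux


/-- the `d` matrices `A·B·A·e_{B,1}` and `e_{A,i}·e_{B,1}` (`2 ≤ i ≤ d`) are
linearly independent and form a basis of the left ideal `M_d(ℂ)·e_{B,1}`, which is therefore a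
`d`-dimensional ℂ-vector space. -/
theorem basis_of_left_ideal {d : ℕ} (hd : 1 ≤ d) (hd5 : d ≤ 5)
    (A B : Matrix (Fin d) (Fin d) ℂ)
    (hA : IsUnit A) (hB : IsUnit B)
    (hbraid : A * B * A = B * A * B)
    (hsimple : Algebra.adjoin ℂ ({A, B} : Set (Matrix (Fin d) (Fin d) ℂ)) = ⊤)
    (lam : Fin d → ℂ) (hinj : Function.Injective lam)
    (P : Matrix (Fin d) (Fin d) ℂ) (hP : IsUnit P)
    (hdiag : A = P * Matrix.diagonal lam * P⁻¹) :
    LinearIndependent ℂ (fun i : Fin d =>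
      if i = (⟨0, hd⟩ : Fin d) then A * B * A * eigProj lam B ⟨0, hd⟩
      else eigProj lam A i * eigProj lam B ⟨0, hd⟩) ∧
    Submodule.span ℂ (Set.range (fun i : Fin d =>
      if i = (⟨0, hd⟩ : Fin d) then A * B * A * eigProj lam B ⟨0, hd⟩
      else eigProj lam A i * eigProj lam B ⟨0, hd⟩))
      = Submodule.span ℂ {Y : Matrix (Fin d) (Fin d) ℂ |
          ∃ X : Matrix (Fin d) (Fin d) ℂ, Y = X * eigProj lam B ⟨0, hd⟩} ∧
    Module.finrank ℂ ↥(Submodule.span ℂ {Y : Matrix (Fin d) (Fin d) ℂ |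
          ∃ X : Matrix (Fin d) (Fin d) ℂ, Y = X * eigProj lam B ⟨0, hd⟩}) = d := by
  classical
  set z : Fin d := ⟨0, hd⟩ with hzdef
  have hPdet : IsUnit P.det := (Matrix.isUnit_iff_isUnit_det P).1 hP
  have hPP : P * P⁻¹ = 1 := Matrix.mul_nonsing_inv P hPdet
  have hP'P : P⁻¹ * P = 1 := Matrix.nonsing_inv_mul P hPdet
  have hPinv : IsUnit (P⁻¹) := ⟨⟨P⁻¹, P, hP'P, hPP⟩, rfl⟩
  set N : Matrix (Fin d) (Fin d) ℂ := P⁻¹ * B * P with hNdef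
  have hΛA : P⁻¹ * A * P = Matrix.diagonal lam := by
    rw [hdiag]; exact BraidAux.conj_cancel hP'P
  have hBN : B = P * N * P⁻¹ := by
    rw [hNdef]; exact (BraidAux.conj_cancel hPP).symm
  have hNu : IsUnit N := by rw [hNdef]; exact (hPinv.mul hB).mul hP
  have hΛu : IsUnit (Matrix.diagonal lam) := by
    rw [← hΛA]; exact (hPinv.mul hA).mul hP
  have hlam0 : ∀ k, lam k ≠ 0 := by
    have h1 : IsUnit (Matrix.diagonal lam).det := (Matrix.isUnit_iff_isUnit_det _).1 hΛu
    rw [Matrix.det_diagonal] at h1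
    intro k hk
    exact (isUnit_iff_ne_zero.1 h1) (Finset.prod_eq_zero (Finset.mem_univ k) hk)
  have hconjm : ∀ X Y : Matrix (Fin d) (Fin d) ℂ,
      (P⁻¹*X*P)*(P⁻¹*Y*P) = P⁻¹*(X*Y)*P := fun X Y => BraidAux.conj_mul' hPP
  have hbraidN : Matrix.diagonal lam * N * Matrix.diagonal lam
      = N * Matrix.diagonal lam * N := by
    rw [← hΛA, hNdef, hconjm, hconjm, hconjm, hconjm, hbraid]
  have hadjN : Algebra.adjoin ℂ
      ({Matrix.diagonal lam, N} : Set (Matrix (Fin d) (Fin d) ℂ)) = ⊤ := by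
    rw [eq_top_iff]
    rintro X -
    have himg : (BraidAux.conjAlgHom (P⁻¹) P hP'P hPP) '' ({A, B} : Set _)
        = {Matrix.diagonal lam, N} := by
      rw [Set.image_pair,
        show (BraidAux.conjAlgHom (P⁻¹) P hP'P hPP) A = Matrix.diagonal lam from hΛA,
        show (BraidAux.conjAlgHom (P⁻¹) P hP'P hPP) B = N from hNdef.symm]
    have hXeq : X = (BraidAux.conjAlgHom (P⁻¹) P hP'P hPP) (P * X * P⁻¹) :=
      (BraidAux.conj_cancel hP'P).symm
    rw [hXeq, ← himg, ← AlgHom.map_adjoin]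
    exact Subalgebra.mem_map.2 ⟨P * X * P⁻¹, by rw [hsimple]; exact Algebra.mem_top, rfl⟩
  obtain ⟨δ, hδ0, hδ⟩ := BraidAux.Dsq_scalar hd lam N hΛu hNu hbraidN hadjN
  have hoff := BraidAux.offdiag_all hd5 lam hinj hlam0 N δ hδ0 hbraidN hadjN hδ
  have hGLG := BraidAux.rel_DLD δ hbraidN hδ
  set G : Matrix (Fin d) (Fin d) ℂ := Matrix.diagonal lam * N * Matrix.diagonal lam with hGdef
  have hABA : A * B * A = P * G * P⁻¹ := by
    rw [hGdef, hdiag, hBN, BraidAux.conj_mul' hP'P, BraidAux.conj_mul' hP'P]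
  set D' : Matrix (Fin d) (Fin d) ℂ := δ⁻¹ • G with hD'def
  have hGD' : G * D' = 1 := by
    rw [hD'def, mul_smul_comm, hδ, smul_smul, inv_mul_cancel₀ hδ0, one_smul]
  have hD'G : D' * G = 1 := by
    rw [hD'def, smul_mul_assoc, hδ, smul_smul, inv_mul_cancel₀ hδ0, one_smul]
  set Q : Matrix (Fin d) (Fin d) ℂ := P * D' with hQdef
  set Q' : Matrix (Fin d) (Fin d) ℂ := G * P⁻¹ with hQ'def
  have hQQ' : Q * Q' = 1 := by
    rw [hQdef, hQ'def]
    calc (P*D')*(G*P⁻¹) = P*((D'*G)*P⁻¹) := by simp only [mul_assoc]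
    _ = 1 := by rw [hD'G, one_mul, hPP]
  have hQ'Q : Q' * Q = 1 := by
    rw [hQdef, hQ'def]
    calc (G*P⁻¹)*(P*D') = G*((P⁻¹*P)*D') := by simp only [mul_assoc]
    _ = 1 := by rw [hP'P, one_mul, hGD']
  have hD'ΛG : D' * Matrix.diagonal lam * G = N := by
    rw [hD'def, smul_mul_assoc, smul_mul_assoc, hGLG, smul_smul,
      inv_mul_cancel₀ hδ0, one_smul]
  have hBQ : B = Q * Matrix.diagonal lam * Q' := by
    rw [hBN, hQdef, hQ'def]
    calc P*N*P⁻¹ = P*(D'*Matrix.diagonal lam*G)*P⁻¹ := by rw [hD'ΛG]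
    _ = (P*D')*Matrix.diagonal lam*(G*P⁻¹) := by simp only [mul_assoc]
  have hEB : eigProj lam B z = Q * Matrix.single z z 1 * Q' := by
    rw [hBQ]; exact BraidAux.eigProj_conj lam hinj Q Q' hQQ' hQ'Q z
  have hEA : ∀ i, eigProj lam A i = P * Matrix.single i i 1 * P⁻¹ := fun i => by
    rw [hdiag]; exact BraidAux.eigProj_conj lam hinj P P⁻¹ hPP hP'P i
  have hD'iz : ∀ i, D' i z = δ⁻¹ * G i z := fun i => by
    rw [hD'def, Matrix.smul_apply, smul_eq_mul]
  set g : Fin d → Matrix (Fin d) (Fin d) ℂ := fun i => P * Matrix.single i z 1 * Q'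
    with hgdef
  have hc0 : ∀ i : Fin d, (if i = z then (1:ℂ) else δ⁻¹ * G i z) ≠ 0 := by
    intro i
    split_ifs with h
    · exact one_ne_zero
    · exact mul_ne_zero (inv_ne_zero hδ0) (hoff i z h)
  have hfam : (fun i : Fin d => if i = z then A * B * A * eigProj lam B z
      else eigProj lam A i * eigProj lam B z)
      = fun i => (if i = z then (1:ℂ) else δ⁻¹ * G i z) • g i := by
    funext i
    by_cases h : i = z
    · rw [if_pos h, if_pos h, one_smul, h, hgdef]
      rw [hEB, hABA, hQdef]
      calc (P*G*P⁻¹)*((P*D')*Matrix.single z z 1*Q')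
          = P*((G*(P⁻¹*P))*(D'*(Matrix.single z z 1*Q'))) := by simp only [mul_assoc]
      _ = P*(G*(D'*(Matrix.single z z 1*Q'))) := by rw [hP'P, mul_one]
      _ = P*((G*D')*(Matrix.single z z 1*Q')) := by simp only [mul_assoc]
      _ = P*(Matrix.single z z 1*Q') := by rw [hGD', one_mul]
      _ = P*Matrix.single z z 1*Q' := by simp only [mul_assoc]
    · rw [if_neg h, if_neg h, hgdef]
      rw [hEA i, hEB, hQdef]
      calc (P*Matrix.single i i 1*P⁻¹)*((P*D')*Matrix.single z z 1*Q')
          = P*(Matrix.single i i 1*((P⁻¹*P)*(D'*(Matrix.single z z 1*Q')))) := by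
            simp only [mul_assoc]
      _ = P*(Matrix.single i i 1*(D'*(Matrix.single z z 1*Q'))) := by rw [hP'P, one_mul]
      _ = (P*(Matrix.single i i 1*D'*Matrix.single z z 1))*Q' := by simp only [mul_assoc]
      _ = (P*(D' i z • Matrix.single i z 1))*Q' := by rw [BraidAux.sandwich]
      _ = (δ⁻¹ * G i z) • (P*Matrix.single i z 1*Q') := by
            rw [hD'iz, mul_smul_comm, smul_mul_assoc]
  have hgLI : LinearIndependent ℂ g := by
    rw [Fintype.linearIndependent_iff]
    intro l hl i
    have hl' : ∑ k, l k • (P * Matrix.single k z 1 * Q') = 0 := by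
      simp only [hgdef] at hl
      exact hl
    have hsum : P * (∑ k, l k • Matrix.single k z (1:ℂ)) * Q' = 0 := by
      rw [BraidAux.conj_sum]; exact hl'
    have hX : (∑ k, l k • Matrix.single k z (1:ℂ)) = 0 := by
      calc (∑ k, l k • Matrix.single k z (1:ℂ))
          = P⁻¹*(P*(∑ k, l k • Matrix.single k z (1:ℂ))*Q')*Q :=
            (BraidAux.sandwich_cancel hP'P hQ'Q).symm
      _ = P⁻¹*0*Q := by rw [hsum]
      _ = 0 := by rw [mul_zero, zero_mul]
    have hentry := congrFun (congrFun hX i) z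
    rw [Matrix.sum_apply] at hentry
    rw [Finset.sum_eq_single i (fun k _ hk => by
        rw [Matrix.smul_apply, Matrix.single_apply_of_ne _ _ _ _ _ (by tauto),
          smul_zero])
      (fun h => absurd (Finset.mem_univ i) h)] at hentry
    rw [Matrix.smul_apply, Matrix.single_apply_same, smul_eq_mul, mul_one,
      Matrix.zero_apply] at hentry
    exact hentry
  have key1 : LinearIndependent ℂ
      (fun i : Fin d => (if i = z then (1:ℂ) else δ⁻¹ * G i z) • g i) := by
    have h := hgLI.units_smul (fun i => Units.mk0 _ (hc0 i))
    exact h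
  have hIdeal : ∀ i : Fin d, (g i) ∈ {Y : Matrix (Fin d) (Fin d) ℂ |
      ∃ X : Matrix (Fin d) (Fin d) ℂ, Y = X * eigProj lam B z} := by
    intro i
    refine ⟨g i, ?_⟩
    rw [hEB, hgdef]
    refine Eq.symm ?_
    calc (P*Matrix.single i z 1*Q')*(Q*Matrix.single z z 1*Q')
        = P*(Matrix.single i z 1*((Q'*Q)*(Matrix.single z z 1*Q'))) := by
          simp only [mul_assoc]
    _ = P*(Matrix.single i z 1*(Matrix.single z z 1*Q')) := by rw [hQ'Q, one_mul]
    _ = P*((Matrix.single i z 1*Matrix.single z z 1)*Q') := by simp only [mul_assoc]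
    _ = P*(Matrix.single i z 1*Q') := by rw [Matrix.single_mul_single_same, one_mul]
    _ = P*Matrix.single i z 1*Q' := by simp only [mul_assoc]
  have hspan2 : Submodule.span ℂ (Set.range g)
      = Submodule.span ℂ {Y : Matrix (Fin d) (Fin d) ℂ |
          ∃ X : Matrix (Fin d) (Fin d) ℂ, Y = X * eigProj lam B z} := by
    apply le_antisymm
    · rw [Submodule.span_le]
      rintro _ ⟨i, rfl⟩
      exact Submodule.subset_span (hIdeal i)
    · rw [Submodule.span_le]
      rintro Y ⟨X, rfl⟩
      have hPM : P * (P⁻¹*X*Q) = X * Q := by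
        calc P*(P⁻¹*X*Q) = (P*P⁻¹)*(X*Q) := by simp only [mul_assoc]
        _ = X*Q := by rw [hPP, one_mul]
      have hdecomp : X * eigProj lam B z = ∑ k, (P⁻¹*X*Q) k z • g k := by
        rw [hEB]
        calc X * (Q*Matrix.single z z 1*Q')
            = (X*Q)*(Matrix.single z z 1*Q') := by simp only [mul_assoc]
        _ = (P*(P⁻¹*X*Q))*(Matrix.single z z 1*Q') := by rw [hPM]
        _ = P*((P⁻¹*X*Q)*Matrix.single z z 1)*Q' := by simp only [mul_assoc]
        _ = P*(∑ k, (P⁻¹*X*Q) k z • Matrix.single k z 1)*Q' := by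
              rw [BraidAux.col_decomp]
        _ = ∑ k, (P⁻¹*X*Q) k z • (P * Matrix.single k z 1 * Q') :=
              BraidAux.conj_sum P Q' _ _
        _ = ∑ k, (P⁻¹*X*Q) k z • g k := by rw [hgdef]
      rw [hdecomp]
      exact Submodule.sum_mem _ fun k _ =>
        Submodule.smul_mem _ _ (Submodule.subset_span ⟨k, rfl⟩)
  have hspan1 : Submodule.span ℂ (Set.range
        (fun i : Fin d => (if i = z then (1:ℂ) else δ⁻¹ * G i z) • g i))
      = Submodule.span ℂ (Set.range g) := by
    apply le_antisymm
    · rw [Submodule.span_le]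
      rintro _ ⟨i, rfl⟩
      exact Submodule.smul_mem _ _ (Submodule.subset_span ⟨i, rfl⟩)
    · rw [Submodule.span_le]
      rintro _ ⟨i, rfl⟩
      have heq : g i = (if i = z then (1:ℂ) else δ⁻¹ * G i z)⁻¹
          • ((if i = z then (1:ℂ) else δ⁻¹ * G i z) • g i) := by
        rw [smul_smul, inv_mul_cancel₀ (hc0 i), one_smul]
      rw [heq]
      exact Submodule.smul_mem _ _ (Submodule.subset_span ⟨i, rfl⟩)
  refine ⟨?_, ?_, ?_⟩
  · rw [hfam]; exact key1
  · rw [hfam, hspan1, hspan2]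
  · rw [← hspan2, finrank_span_eq_card hgLI, Fintype.card_fin]
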